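/- arXiv:2008.10202 — 5 statements merged into one kernel-verified Lean document; each statement's English description precedes it below -/
import Mathlib

section
/- Let M be an ε-differentially private mechanism and S* a measurable invariant set with P(M(x) ∈ S*) > 0 for all x in the invariant-conforming set X*. Define the constrained mechanism M* by M*(x) ∼ M(x) | M(x) ∈ S*. Then for all pairs x, x' ∈ X* with d(x,x') = k (k-step neighbors), and for all measurable B, P(M*(x) ∈ B) ≤ exp(2kε) P(M*(x') ∈ B). -/
lemma kstep_dp {Ω : Type*} [Fintype Ω] [DecidableEq Ω] {n : ℕ}
    {E : Type*} [MeasurableSpace E]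
    (ε : ℝ)
    (P : (Fin n → Ω) → Set E → ℝ)
    (hDP : ∀ x x' : Fin n → Ω,
      (Finset.univ.filter fun i => x i ≠ x' i).card = 1 →
      ∀ B : Set E, MeasurableSet B → P x B ≤ Real.exp ε * P x' B) :
    ∀ (k : ℕ) (x x' : Fin n → Ω),
      (Finset.univ.filter fun i => x i ≠ x' i).card = k →
      ∀ B : Set E, MeasurableSet B → P x B ≤ Real.exp (k * ε) * P x' B := by
  intro k
  induction k with
  | zero =>
    intro x x' h B hB
    have hx : x = x' := by
      funext i
      by_contra hne
      have hmem : i ∈ Finset.univ.filter fun i => x i ≠ x' i := by simp [hne]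
      have := Finset.card_pos.mpr ⟨i, hmem⟩
      omega
    simp [hx]
  | succ k ih =>
    intro x x' h B hB
    have hne : (Finset.univ.filter fun i => x i ≠ x' i).Nonempty := by
      rw [← Finset.card_pos, h]; omega
    obtain ⟨i, hi⟩ := hne
    have hxi : x i ≠ x' i := by simpa using hi
    set y := Function.update x i (x' i) with hy
    have h1 : (Finset.univ.filter fun j => x j ≠ y j).card = 1 := by
      have he : (Finset.univ.filter fun j => x j ≠ y j) = {i} := by
        ext j
        simp only [Finset.mem_filter, Finset.mem_univ, true_and, Finset.mem_singleton]
        constructor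
        · intro hj
          by_contra hji
          exact hj (by simp [hy, Function.update_of_ne hji])
        · rintro rfl
          simp [hy, hxi]
      rw [he]; simp
    have h2 : (Finset.univ.filter fun j => y j ≠ x' j).card = k := by
      have he : (Finset.univ.filter fun j => y j ≠ x' j)
          = (Finset.univ.filter fun j => x j ≠ x' j).erase i := by
        ext j
        simp only [Finset.mem_filter, Finset.mem_univ, true_and, Finset.mem_erase]
        constructor
        · intro hj
          rcases eq_or_ne j i with rfl | hji
          · simp [hy] at hj
          · exact ⟨hji, by simpa [hy, Function.update_of_ne hji] using hj⟩
        · rintro ⟨hji, hj⟩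
          simpa [hy, Function.update_of_ne hji] using hj
      rw [he, Finset.card_erase_of_mem hi, h]; omega
    calc P x B ≤ Real.exp ε * P y B := hDP x y h1 B hB
    _ ≤ Real.exp ε * (Real.exp (k * ε) * P x' B) := by
        have := ih y x' h2 B hB
        nlinarith [Real.exp_pos ε]
    _ = Real.exp ((k + 1 : ℕ) * ε) * P x' B := by
        rw [← mul_assoc, ← Real.exp_add]
        push_cast
        ring_nf

/-- the conditional (invariant-respecting) mechanism
`M*(x) ~ M(x) | M(x) ∈ S*` built from an ε-differentially private mechanism
satisfies a 2kε differential-privacy bound for pairs of invariant-conforming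
databases at Hamming distance k. -/
theorem constrained_mechanism_two_eps
    {Ω : Type*} [Fintype Ω] [DecidableEq Ω] {n : ℕ}
    {E : Type*} [MeasurableSpace E]
    (ε : ℝ) (hε : 0 < ε)
    (P : (Fin n → Ω) → Set E → ℝ)
    (hP_nonneg : ∀ x B, 0 ≤ P x B)
    -- ε-differential privacy of the unconstrained mechanism M
    (hDP : ∀ x x' : Fin n → Ω,
      (Finset.univ.filter fun i => x i ≠ x' i).card = 1 →
      ∀ B : Set E, MeasurableSet B → P x B ≤ Real.exp ε * P x' B)
    -- the invariant set S* and the conforming databases X*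
    (Xstar : Set (Fin n → Ω)) (Sstar : Set E) (hSstar : MeasurableSet Sstar)
    (hpos : ∀ x ∈ Xstar, 0 < P x Sstar)
    (k : ℕ)
    (x x' : Fin n → Ω) (hx : x ∈ Xstar) (hx' : x' ∈ Xstar)
    (hk : (Finset.univ.filter fun i => x i ≠ x' i).card = k)
    (B : Set E) (hB : MeasurableSet B) :
    P x (B ∩ Sstar) / P x Sstar ≤
      Real.exp (2 * k * ε) * (P x' (B ∩ Sstar) / P x' Sstar) := by
  have hk' : (Finset.univ.filter fun i => x' i ≠ x i).card = k := by
    rw [← hk]; congr 1; ext j; simp [ne_comm]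
  have hnum : P x (B ∩ Sstar) ≤ Real.exp (k * ε) * P x' (B ∩ Sstar) :=
    kstep_dp ε P hDP k x x' hk (B ∩ Sstar) (hB.inter hSstar)
  have hden : P x' Sstar ≤ Real.exp (k * ε) * P x Sstar :=
    kstep_dp ε P hDP k x' x hk' Sstar hSstar
  have hs : 0 < P x Sstar := hpos x hx
  have hs' : 0 < P x' Sstar := hpos x' hx'
  have hE : (0:ℝ) < Real.exp (k * ε) := Real.exp_pos _
  have ha' : 0 ≤ P x' (B ∩ Sstar) := hP_nonneg _ _
  have h2E : Real.exp (2 * k * ε) = Real.exp (k * ε) * Real.exp (k * ε) := by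
    rw [← Real.exp_add]; ring_nf
  rw [h2E, div_le_iff₀ hs]
  have hq : 0 ≤ P x' (B ∩ Sstar) / P x' Sstar := div_nonneg ha' hs'.le
  have hqe : P x' (B ∩ Sstar) / P x' Sstar * P x' Sstar = P x' (B ∩ Sstar) :=
    div_mul_cancel₀ _ hs'.ne'
  nlinarith [mul_le_mul_of_nonneg_left hden (mul_nonneg hE.le hq)]
end

section
/- Let u₁, u₂ be i.i.d. Laplace random variables with scale 2/ε, and let β ∈ (0,1) with β ≠ 1/2. Then the density of ũ = βu₁ + (1−β)u₂ is p(ũ) = [ε/(4(2β−1))]·[β·exp(−(ε/(2β))|ũ|) − (1−β)·exp(−(ε/(2(1−β)))|ũ|)], i.e., a signed (non-convex) mixture of Lap(2β/ε) and Lap(2(1−β)/ε) densities with weights β²/(2β−1) and −(1−β)²/(2β−1) summing to one. -/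
open MeasureTheory Set Real

lemma expIoi {r : ℝ} (hr : 0 < r) (a : ℝ) :
    ∫ v in Ioi a, Real.exp (-(r * v)) = Real.exp (-(r * a)) / r := by
  have h := integral_comp_mul_left_Ioi (fun x => Real.exp (-x)) a hr
  simp only [smul_eq_mul] at h
  rw [h, integral_exp_neg_Ioi]
  field_simp

lemma intOn_expIoi {r : ℝ} (hr : 0 < r) (a : ℝ) :
    IntegrableOn (fun v : ℝ => Real.exp (-(r * v))) (Ioi a) := by
  simpa [neg_mul] using exp_neg_integrableOn_Ioi a hr

lemma expIic {r : ℝ} (hr : 0 < r) (a : ℝ) :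
    ∫ v in Iic a, Real.exp (r * v) = Real.exp (r * a) / r := by
  have h := integral_comp_neg_Iic a (fun x => Real.exp (-(r * x)))
  simp only [mul_neg, neg_neg] at h
  rw [show (fun v : ℝ => Real.exp (r * v)) = fun v : ℝ => Real.exp (r * v) from rfl]
  calc ∫ v in Iic a, Real.exp (r * v) = ∫ x in Ioi (-a), Real.exp (-(r * x)) := by
        rw [← h]
    _ = Real.exp (r * a) / r := by rw [expIoi hr]; ring_nf

lemma intOn_expIic {r : ℝ} (hr : 0 < r) (a : ℝ) :
    IntegrableOn (fun v : ℝ => Real.exp (r * v)) (Iic a) := by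
  have m : MeasurableEmbedding fun x : ℝ => -x := (Homeomorph.neg ℝ).measurableEmbedding
  rw [show (volume : Measure ℝ) = Measure.map (fun x : ℝ => -x) volume from
    (Measure.map_neg_eq_self _).symm, m.integrableOn_map_iff]
  simp only [Function.comp_def, mul_neg, neg_preimage, neg_Iic]
  rw [integrableOn_Ici_iff_integrableOn_Ioi]
  simpa [neg_mul] using exp_neg_integrableOn_Ioi (-a) hr

lemma aux_nonneg (p q z : ℝ) (hp : 0 < p) (hq : 0 < q) (hpq : p ≠ q) (hz : 0 ≤ z) :
    ∫ v : ℝ, Real.exp (-(p * |z - v|) - q * |v|) =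
      (2 * p * Real.exp (-(q * z)) - 2 * q * Real.exp (-(p * z))) / (p ^ 2 - q ^ 2) := by
  set f : ℝ → ℝ := fun v => Real.exp (-(p * |z - v|) - q * |v|) with hf
  -- equalities on the three regions
  have e1 : EqOn f (fun v => Real.exp (-(p * z)) * Real.exp ((p + q) * v)) (Iic 0) := by
    intro v hv
    simp only [f, ← Real.exp_add]
    congr 1
    rw [abs_of_nonneg (by simp at hv; linarith), abs_of_nonpos (by simpa using hv)]
    ring
  have e2 : EqOn f (fun v => Real.exp (-(p * z)) * Real.exp ((p - q) * v)) (Ioc 0 z) := by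
    intro v hv
    simp only [f, ← Real.exp_add]
    congr 1
    rw [abs_of_nonneg (by linarith [hv.2]), abs_of_pos hv.1]
    ring
  have e3 : EqOn f (fun v => Real.exp (p * z) * Real.exp (-((p + q) * v))) (Ioi z) := by
    intro v hv
    simp only [f, ← Real.exp_add]
    congr 1
    rw [abs_of_nonpos (by simp at hv; linarith), abs_of_pos (lt_of_le_of_lt hz hv)]
    ring
  have hpq' : 0 < p + q := by linarith
  -- integrability
  have i1 : IntegrableOn f (Iic 0) :=
    IntegrableOn.congr_fun ((intOn_expIic hpq' 0).const_mul _)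
      (fun v hv => (e1 hv).symm) measurableSet_Iic
  have i2 : IntegrableOn f (Ioc 0 z) := by
    refine IntegrableOn.congr_fun ?_ (fun v hv => (e2 hv).symm) measurableSet_Ioc
    exact (Continuous.integrableOn_Ioc (by continuity))
  have i3 : IntegrableOn f (Ioi z) :=
    IntegrableOn.congr_fun ((intOn_expIoi hpq' z).const_mul _)
      (fun v hv => (e3 hv).symm) measurableSet_Ioi
  have iIoi0 : IntegrableOn f (Ioi 0) := by
    rw [← Ioc_union_Ioi_eq_Ioi hz]
    exact i2.union i3
  -- split
  have hsplit : ∫ v : ℝ, f v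
      = (∫ v in Iic 0, f v) + ((∫ v in Ioc 0 z, f v) + ∫ v in Ioi z, f v) := by
    rw [← intervalIntegral.integral_Iic_add_Ioi i1 iIoi0]
    congr 1
    rw [← setIntegral_union Ioc_disjoint_Ioi_same measurableSet_Ioi i2 i3,
      Ioc_union_Ioi_eq_Ioi hz]
  -- compute each
  have c1 : ∫ v in Iic 0, f v = Real.exp (-(p * z)) / (p + q) := by
    rw [setIntegral_congr_fun measurableSet_Iic e1, integral_const_mul, expIic hpq' 0]
    simp [div_eq_mul_inv]
  have c2 : ∫ v in Ioc 0 z, f v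
      = (Real.exp (-(q * z)) - Real.exp (-(p * z))) / (p - q) := by
    rw [setIntegral_congr_fun measurableSet_Ioc e2, integral_const_mul,
      ← intervalIntegral.integral_of_le hz]
    have hne : p - q ≠ 0 := sub_ne_zero.mpr hpq
    have : ∫ v in (0:ℝ)..z, Real.exp ((p - q) * v)
        = (Real.exp ((p - q) * z) - 1) / (p - q) := by
      rw [intervalIntegral.integral_comp_mul_left (fun x => Real.exp x) hne]
      simp [integral_exp, smul_eq_mul]
      ring
    have key : Real.exp (-(p*z)) * (Real.exp ((p-q)*z) - 1)
        = Real.exp (-(q*z)) - Real.exp (-(p*z)) := by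
      rw [mul_sub, mul_one, ← Real.exp_add]
      congr 2
      ring
    rw [this, ← key]
    ring
  have c3 : ∫ v in Ioi z, f v = Real.exp (-(q * z)) / (p + q) := by
    rw [setIntegral_congr_fun measurableSet_Ioi e3, integral_const_mul, expIoi hpq' z]
    have key : Real.exp (p*z) * Real.exp (-((p+q)*z)) = Real.exp (-(q*z)) := by
      rw [← Real.exp_add]; congr 1; ring
    rw [← key]
    ring
  rw [hsplit, c1, c2, c3]
  have h1 : p + q ≠ 0 := ne_of_gt hpq'
  have h2 : p - q ≠ 0 := sub_ne_zero.mpr hpq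
  have h3 : p ^ 2 - q ^ 2 ≠ 0 := by
    rw [show p^2 - q^2 = (p+q)*(p-q) by ring]; exact mul_ne_zero h1 h2
  field_simp
  ring

lemma aux_all (p q z : ℝ) (hp : 0 < p) (hq : 0 < q) (hpq : p ≠ q) :
    ∫ v : ℝ, Real.exp (-(p * |z - v|) - q * |v|) =
      (2 * p * Real.exp (-(q * |z|)) - 2 * q * Real.exp (-(p * |z|))) / (p ^ 2 - q ^ 2) := by
  rcases le_or_gt 0 z with hz | hz
  · rw [abs_of_nonneg hz]; exact aux_nonneg p q z hp hq hpq hz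
  · have h := aux_nonneg p q (-z) hp hq hpq (by linarith)
    rw [abs_of_neg hz, ← h]
    rw [← integral_neg_eq_self (fun v => Real.exp (-(p * |(-z) - v|) - q * |v|)) volume]
    congr 1
    ext v
    rw [show (-z) - (-v) = -(z - v) by ring, abs_neg, abs_neg]

/-- density of ũ = βu₁ + (1-β)u₂ for u₁, u₂ i.i.d. Lap(2/ε) and
β ∈ (0,1), β ≠ 1/2: integrating the joint density
p(ũ, u₂) = (ε²/(16β))exp(-(ε/(2β))[|ũ-(1-β)u₂| + β|u₂|]) over u₂ gives a signed
mixture of two Laplace densities. -/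
theorem convex_combination_laplace_density
    (ε β : ℝ) (hε : 0 < ε) (hβ : β ∈ Set.Ioo (0 : ℝ) 1) (hβhalf : β ≠ 1 / 2)
    (z : ℝ) :
    (∫ u₂ : ℝ, (ε ^ 2 / (16 * β)) *
        Real.exp (-(ε / (2 * β)) * (|z - (1 - β) * u₂| + β * |u₂|))) =
      (ε / (4 * (2 * β - 1))) *
        (β * Real.exp (-(ε / (2 * β)) * |z|) -
          (1 - β) * Real.exp (-(ε / (2 * (1 - β))) * |z|)) ∧
    (ε / (4 * (2 * β - 1))) *
        (β * Real.exp (-(ε / (2 * β)) * |z|) -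
          (1 - β) * Real.exp (-(ε / (2 * (1 - β))) * |z|)) =
      (β ^ 2 / (2 * β - 1)) * ((1 / (2 * (2 * β / ε))) * Real.exp (-|z| / (2 * β / ε)))
        - ((1 - β) ^ 2 / (2 * β - 1)) *
            ((1 / (2 * (2 * (1 - β) / ε))) * Real.exp (-|z| / (2 * (1 - β) / ε))) := by
  obtain ⟨hβ0, hβ1⟩ := hβ
  have hc : (0:ℝ) < 1 - β := by linarith
  have h2β : 2 * β - 1 ≠ 0 := by intro h; apply hβhalf; linarith
  set p := ε / (2 * β) with hp'
  set q := ε / (2 * (1 - β)) with hq'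
  have hp : 0 < p := div_pos hε (by linarith)
  have hq : 0 < q := div_pos hε (by linarith)
  have hpq : p ≠ q := by
    rw [hp', hq']
    intro h
    rw [div_eq_div_iff (by positivity) (by positivity)] at h
    have := mul_left_cancel₀ (ne_of_gt hε) h
    apply hβhalf; linarith
  -- exp-argument equalities
  have eA : -(p * |z|) = -(ε / (2 * β)) * |z| := by rw [hp']; ring
  have eB : -(q * |z|) = -(ε / (2 * (1 - β))) * |z| := by rw [hq']; ring
  have eA2 : -|z| / (2 * β / ε) = -(ε / (2 * β)) * |z| := by
    field_simp
  have eB2 : -|z| / (2 * (1 - β) / ε) = -(ε / (2 * (1 - β))) * |z| := by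
    field_simp
  constructor
  · -- the integral computation
    have key : ∀ u : ℝ,
        (ε ^ 2 / (16 * β)) * Real.exp (-(ε / (2 * β)) * (|z - (1 - β) * u| + β * |u|))
          = (ε ^ 2 / (16 * β)) *
              (fun v => Real.exp (-(p * |z - v|) - q * |v|)) ((1 - β) * u) := by
      intro u
      simp only
      congr 1
      congr 1
      rw [abs_mul, abs_of_pos hc, hp', hq']
      field_simp
      ring
    rw [integral_congr_ae (Filter.Eventually.of_forall key)]
    rw [MeasureTheory.integral_const_mul,
      MeasureTheory.Measure.integral_comp_mul_left
        (fun v => Real.exp (-(p * |z - v|) - q * |v|)) (1 - β),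
      aux_all p q z hp hq hpq, eA, eB]
    have hd : p ^ 2 - q ^ 2 ≠ 0 := by
      rw [show p ^ 2 - q ^ 2 = (p + q) * (p - q) by ring]
      exact mul_ne_zero (by positivity) (sub_ne_zero.mpr hpq)
    rw [abs_of_pos (inv_pos.mpr hc), smul_eq_mul]
    generalize Real.exp (-(ε / (2 * β)) * |z|) = A
    generalize Real.exp (-(ε / (2 * (1 - β))) * |z|) = B
    have h12 : 1 - 2 * β ≠ 0 := by intro h; apply hβhalf; linarith
    have hD : p ^ 2 - q ^ 2 = ε ^ 2 * (1 - 2 * β) / (4 * β ^ 2 * (1 - β) ^ 2) := by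
      rw [hp', hq']; field_simp; ring
    rw [hD, hp', hq']
    rw [show (1:ℝ) - 2 * β = -(2 * β - 1) by ring]
    field_simp
    ring
  · rw [← eA2, ← eB2] at *
    generalize Real.exp (-|z| / (2 * β / ε)) = A
    generalize Real.exp (-|z| / (2 * (1 - β) / ε)) = B
    field_simp
    ring
end

section
/- The density p_ε(x) = (ε/4)(1 + ε|x|)exp(−ε|x|) on ℝ (the density of the average of two i.i.d. Lap(2/ε) variables) satisfies: for all a, b ∈ ℝ, sup_x p_ε(x−a)/p_ε(x−b) ≤ exp(ε|a−b|). Consequently the additive mechanism M(s) = s + ũ with ũ having density p_ε, applied to a query with sensitivity |s(x)−s(x')| ≤ 1 on neighbors, is ε-differentially private. -/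
open MeasureTheory

lemma key_ineq (ε : ℝ) (hε : 0 < ε) (u v : ℝ) (hu : 0 ≤ u) (hv : 0 ≤ v) :
    (1 + ε * u) * Real.exp (-ε * u) ≤ Real.exp (ε * |u - v|) * ((1 + ε * v) * Real.exp (-ε * v)) := by
  rcases le_total u v with h | h
  · have h1 : (1 + ε * u) ≤ (1 + ε * v) := by nlinarith
    have h2 : Real.exp (-ε * u) ≤ Real.exp (ε * |u - v|) * Real.exp (-ε * v) := by
      rw [← Real.exp_add]
      apply Real.exp_le_exp.mpr
      rw [abs_of_nonpos (by linarith)]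
      nlinarith
    have hp1 : (0:ℝ) < 1 + ε * u := by nlinarith
    calc (1 + ε * u) * Real.exp (-ε * u)
        ≤ (1 + ε * u) * (Real.exp (ε * |u - v|) * Real.exp (-ε * v)) := by
          exact mul_le_mul_of_nonneg_left h2 (le_of_lt hp1)
      _ ≤ (1 + ε * v) * (Real.exp (ε * |u - v|) * Real.exp (-ε * v)) := by
          exact mul_le_mul_of_nonneg_right h1 (by positivity)
      _ = Real.exp (ε * |u - v|) * ((1 + ε * v) * Real.exp (-ε * v)) := by ring
  · -- v ≤ u
    have habs : |u - v| = u - v := abs_of_nonneg (by linarith)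
    have h1 : (1 + ε * u) ≤ (1 + ε * v) * Real.exp (ε * (u - v)) := by
      have := Real.add_one_le_exp (ε * (u - v))
      nlinarith [Real.exp_pos (ε * (u - v)), mul_nonneg hε.le hv,
        mul_nonneg (mul_nonneg hε.le hv) (mul_nonneg hε.le (sub_nonneg.mpr h))]
    have hone : (1:ℝ) ≤ Real.exp (ε * |u - v|) := Real.one_le_exp (by positivity)
    calc (1 + ε * u) * Real.exp (-ε * u)
        ≤ ((1 + ε * v) * Real.exp (ε * (u - v))) * Real.exp (-ε * u) :=
          mul_le_mul_of_nonneg_right h1 (Real.exp_pos _).le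
      _ = (1 + ε * v) * Real.exp (-ε * v) := by
          rw [mul_assoc, ← Real.exp_add, show ε * (u - v) + -ε * u = -ε * v by ring]
      _ ≤ Real.exp (ε * |u - v|) * ((1 + ε * v) * Real.exp (-ε * v)) :=
          le_mul_of_one_le_left (by positivity) hone
  
lemma pw_ineq (ε : ℝ) (hε : 0 < ε) (a b x : ℝ) :
    (ε / 4) * (1 + ε * |x - a|) * Real.exp (-ε * |x - a|) ≤
      Real.exp (ε * |a - b|) * ((ε / 4) * (1 + ε * |x - b|) * Real.exp (-ε * |x - b|)) := by
  have habs : |(|x - a|) - (|x - b|)| ≤ |a - b| := by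
    have := abs_abs_sub_abs_le_abs_sub (x - a) (x - b)
    have h2 : (x - a) - (x - b) = b - a := by ring
    rw [h2, abs_sub_comm b a] at this
    exact this
  have hkey := key_ineq ε hε (|x - a|) (|x - b|) (abs_nonneg _) (abs_nonneg _)
  have hexp : Real.exp (ε * |(|x - a|) - (|x - b|)|) ≤ Real.exp (ε * |a - b|) :=
    Real.exp_le_exp.mpr (mul_le_mul_of_nonneg_left habs hε.le)
  have hnn : (0:ℝ) ≤ (1 + ε * |x - b|) * Real.exp (-ε * |x - b|) := by positivity
  have h := hkey.trans (mul_le_mul_of_nonneg_right hexp hnn)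
  calc (ε / 4) * (1 + ε * |x - a|) * Real.exp (-ε * |x - a|)
      = (ε / 4) * ((1 + ε * |x - a|) * Real.exp (-ε * |x - a|)) := by ring
    _ ≤ (ε / 4) * (Real.exp (ε * |a - b|) * ((1 + ε * |x - b|) * Real.exp (-ε * |x - b|))) :=
        mul_le_mul_of_nonneg_left h (by positivity)
    _ = Real.exp (ε * |a - b|) * ((ε / 4) * (1 + ε * |x - b|) * Real.exp (-ε * |x - b|)) := by ring

lemma integrable_p0 (ε : ℝ) (hε : 0 < ε) :
    Integrable (fun m : ℝ => (ε / 4) * (1 + ε * |m|) * Real.exp (-ε * |m|)) := by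
  have hIoi : IntegrableOn (fun m : ℝ => (ε / 4) * (1 + ε * |m|) * Real.exp (-ε * |m|))
      (Set.Ioi 0) := by
    have h1 : IntegrableOn (fun x : ℝ => Real.exp (-ε * x)) (Set.Ioi 0) :=
      exp_neg_integrableOn_Ioi 0 hε
    have h2 : IntegrableOn (fun x : ℝ => x * Real.exp (-ε * x)) (Set.Ioi 0) := by
      have := integrableOn_rpow_mul_exp_neg_mul_rpow (p := 1) (s := 1) (b := ε)
        (by norm_num) (by norm_num) hε
      refine this.congr_fun (fun x hx => ?_) measurableSet_Ioi
      simp [Real.rpow_one]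
    have hsum : IntegrableOn
        (fun x : ℝ => (ε / 4) * Real.exp (-ε * x) + (ε / 4 * ε) * (x * Real.exp (-ε * x)))
        (Set.Ioi 0) := (h1.const_mul _).add (h2.const_mul _)
    refine hsum.congr_fun (fun x hx => ?_) measurableSet_Ioi
    have hx0 : (0:ℝ) < x := hx
    rw [abs_of_pos hx0]; ring
  set f : ℝ → ℝ := fun m => (ε / 4) * (1 + ε * |m|) * Real.exp (-ε * |m|) with hf
  have hind : Integrable ((Set.Ioi (0:ℝ)).indicator f) :=
    (integrable_indicator_iff measurableSet_Ioi).mpr hIoi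
  have hcomp := hind.comp_neg
  have heq : (fun x : ℝ => (Set.Ioi (0:ℝ)).indicator f (-x)) = (Set.Iio (0:ℝ)).indicator f := by
    funext y
    by_cases hy : y < 0
    · rw [Set.indicator_of_mem (Set.mem_Ioi.mpr (by linarith : (0:ℝ) < -y)),
        Set.indicator_of_mem (Set.mem_Iio.mpr hy)]
      simp [hf, abs_neg]
    · rw [Set.indicator_of_notMem (by simpa using hy),
        Set.indicator_of_notMem (by simpa using hy)]
  rw [heq] at hcomp
  have hIio : IntegrableOn f (Set.Iio 0) :=
    (integrable_indicator_iff measurableSet_Iio).mp hcomp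
  have hIic : IntegrableOn f (Set.Iic 0) := (integrableOn_Iic_iff_integrableOn_Iio).mpr hIio
  have : Set.Iic (0:ℝ) ∪ Set.Ioi 0 = Set.univ := Set.Iic_union_Ioi
  have h := hIic.union hIoi
  rwa [this, integrableOn_univ] at h

lemma integrable_p (ε : ℝ) (hε : 0 < ε) (c : ℝ) :
    Integrable (fun m : ℝ => (ε / 4) * (1 + ε * |m - c|) * Real.exp (-ε * |m - c|)) :=
  (integrable_p0 ε hε).comp_sub_right c

/-- the density p_ε(x) = (ε/4)(1+ε|x|)exp(-ε|x|) of the average of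
two i.i.d. Lap(2/ε) variables satisfies the ratio bound
p_ε(x-a)/p_ε(x-b) ≤ exp(ε|a-b|); consequently the additive mechanism
M(x) = s(x) + ũ with a sensitivity-1 query is ε-differentially private. -/
theorem average_laplace_mechanism_DP
    (ε : ℝ) (hε : 0 < ε) :
    (∀ a b x : ℝ,
      ((ε / 4) * (1 + ε * |x - a|) * Real.exp (-ε * |x - a|)) /
          ((ε / 4) * (1 + ε * |x - b|) * Real.exp (-ε * |x - b|)) ≤
        Real.exp (ε * |a - b|)) ∧
    ∀ {X : Type} (neighbor : X → X → Prop) (s : X → ℝ),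
      (∀ x x', neighbor x x' → |s x - s x'| ≤ 1) →
      ∀ x x', neighbor x x' → ∀ B : Set ℝ, MeasurableSet B →
        (∫ m in B, (ε / 4) * (1 + ε * |m - s x|) * Real.exp (-ε * |m - s x|)) ≤
          Real.exp ε *
            ∫ m in B, (ε / 4) * (1 + ε * |m - s x'|) * Real.exp (-ε * |m - s x'|) := by
  constructor
  · intro a b x
    have hden : (0:ℝ) < (ε / 4) * (1 + ε * |x - b|) * Real.exp (-ε * |x - b|) := by positivity
    rw [div_le_iff₀ hden]
    have := pw_ineq ε hε a b x
    linarith [this]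
  · intro X neighbor s hsens x x' hnb B hB
    rw [← integral_const_mul]
    refine setIntegral_mono_on ((integrable_p ε hε (s x)).integrableOn)
      (((integrable_p ε hε (s x')).const_mul _).integrableOn) hB (fun m _ => ?_)
    have h1 := pw_ineq ε hε (s x) (s x') m
    have h2 : Real.exp (ε * |s x - s x'|) ≤ Real.exp ε := by
      apply Real.exp_le_exp.mpr
      have := hsens x x' hnb
      nlinarith
    have hnn : (0:ℝ) ≤ (ε / 4) * (1 + ε * |m - s x'|) * Real.exp (-ε * |m - s x'|) := by
      positivity
    calc (ε / 4) * (1 + ε * |m - s x|) * Real.exp (-ε * |m - s x|)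
        ≤ Real.exp (ε * |s x - s x'|) *
            ((ε / 4) * (1 + ε * |m - s x'|) * Real.exp (-ε * |m - s x'|)) := h1
      _ ≤ Real.exp ε * ((ε / 4) * (1 + ε * |m - s x'|) * Real.exp (-ε * |m - s x'|)) :=
          mul_le_mul_of_nonneg_right h2 hnn
end

section
/- For the density p_ε(x) = (ε/4)(1 + ε|x|)exp(−ε|x|), the privacy bound exp(ε|a−b|) is tight: for any fixed a ≠ b, lim_{|x|→∞} [p_ε(x−a)e^{ε|x−a|}]/[p_ε(x−b)e^{ε|x−b|}] = 1, hence sup_x p_ε(x−a)/p_ε(x−b) = exp(ε|a−b|). -/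
open Filter

lemma aux_abs_tendsto (b : ℝ) {l : Filter ℝ}
    (h : Tendsto (fun x : ℝ => |x|) l atTop) :
    Tendsto (fun x : ℝ => |x - b|) l atTop := by
  apply tendsto_atTop_mono (fun x => abs_sub_abs_le_abs_sub x b)
  have := tendsto_atTop_add_const_right l (-|b|) h
  simpa [sub_eq_add_neg] using this

lemma aux_ratio_tendsto (ε d : ℝ) (hε : 0 < ε) {l : Filter ℝ} {u v : ℝ → ℝ}
    (hv : Tendsto v l atTop) (hv0 : ∀ x, 0 ≤ v x)
    (hd : ∀ x, |u x - v x| ≤ d) :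
    Tendsto (fun x => (1 + ε * u x) / (1 + ε * v x)) l (nhds 1) := by
  have hpos : ∀ x, 0 < 1 + ε * v x := by
    intro x
    nlinarith [mul_nonneg hε.le (hv0 x)]
  have h0 : Tendsto (fun x => (1 + ε * u x) / (1 + ε * v x) - 1) l (nhds 0) := by
    refine squeeze_zero_norm (a := fun x => (ε * d) / (1 + ε * v x)) (fun x => ?_) ?_
    · 
      have hp := hpos x
      rw [Real.norm_eq_abs,
        show (1 + ε * u x) / (1 + ε * v x) - 1 = (ε * (u x - v x)) / (1 + ε * v x) by
          field_simp; ring]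
      rw [abs_div, abs_of_pos hp, abs_mul, abs_of_pos hε]
      exact (div_le_div_iff_of_pos_right hp).mpr (mul_le_mul_of_nonneg_left (hd x) hε.le)
    · apply Tendsto.div_atTop tendsto_const_nhds
      have h1 := hv.const_mul_atTop hε
      exact tendsto_atTop_add_const_left l 1 h1
  have := h0.add_const 1
  simpa using this

lemma aux_key (s t δ : ℝ) (hs : 0 ≤ s) (ht : 0 ≤ t)
    (hδ1 : s - t ≤ δ) (hδ2 : t - s ≤ δ) :
    (1 + s) * Real.exp (-s) ≤ (1 + t) * Real.exp (-t) * Real.exp δ := by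
  rcases le_total s t with h | h
  · have h1 : (1 : ℝ) + s ≤ 1 + t := by linarith
    have h2 : Real.exp (-s) ≤ Real.exp (-t) * Real.exp δ := by
      rw [← Real.exp_add]
      exact Real.exp_le_exp.2 (by linarith)
    calc (1 + s) * Real.exp (-s) ≤ (1 + t) * (Real.exp (-t) * Real.exp δ) :=
          mul_le_mul h1 h2 (Real.exp_pos _).le (by linarith)
      _ = (1 + t) * Real.exp (-t) * Real.exp δ := by ring
  · have he := Real.add_one_le_exp (s - t)
    have hmono : (1 + s) * Real.exp (-s) ≤ (1 + t) * Real.exp (-t) := by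
      have h1 : (1 : ℝ) + s ≤ (1 + t) * Real.exp (s - t) := by
        nlinarith [Real.exp_pos (s - t)]
      have h2 : (1 + s) * Real.exp (-s) ≤ (1 + t) * Real.exp (s - t) * Real.exp (-s) :=
        mul_le_mul_of_nonneg_right h1 (Real.exp_pos _).le
      calc (1 + s) * Real.exp (-s) ≤ (1 + t) * Real.exp (s - t) * Real.exp (-s) := h2
        _ = (1 + t) * Real.exp (-t) := by
            rw [mul_assoc, ← Real.exp_add]
            congr 2
            ring
    have hδ0 : 0 ≤ δ := by linarith
    have := Real.one_le_exp hδ0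
    nlinarith [mul_pos (by nlinarith : (0:ℝ) < 1 + t) (Real.exp_pos (-t))]

/-- tightness of the bound exp(ε|a-b|) for
p_ε(x) = (ε/4)(1+ε|x|)exp(-ε|x|): the ratio of g_ε(x) = p_ε(x)e^{ε|x|} at x-a
and x-b tends to 1 as |x| → ∞, and the supremum of p_ε(x-a)/p_ε(x-b) over x
equals exp(ε|a-b|). -/
theorem average_laplace_bound_tight
    (ε : ℝ) (hε : 0 < ε) (a b : ℝ) (hab : a ≠ b) :
    Tendsto
      (fun x : ℝ =>
        (((ε / 4) * (1 + ε * |x - a|) * Real.exp (-ε * |x - a|)) *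
            Real.exp (ε * |x - a|)) /
          (((ε / 4) * (1 + ε * |x - b|) * Real.exp (-ε * |x - b|)) *
            Real.exp (ε * |x - b|)))
      (Filter.comap (fun x : ℝ => |x|) Filter.atTop) (nhds 1) ∧
    (⨆ x : ℝ,
        ((ε / 4) * (1 + ε * |x - a|) * Real.exp (-ε * |x - a|)) /
          ((ε / 4) * (1 + ε * |x - b|) * Real.exp (-ε * |x - b|))) =
      Real.exp (ε * |a - b|) := by
  have hne : (ε / 4 : ℝ) ≠ 0 := by positivity
  have habs : ∀ x : ℝ, |(|x - a| - |x - b|)| ≤ |a - b| := by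
    intro x
    have h1 := abs_abs_sub_abs_le_abs_sub (x - a) (x - b)
    have h2 : (x - a) - (x - b) = -(a - b) := by ring
    rwa [h2, abs_neg] at h1
  have e1 : ∀ y : ℝ, Real.exp (-ε * y) * Real.exp (ε * y) = 1 := by
    intro y
    rw [← Real.exp_add]
    simp
  have e2 : ∀ y : ℝ, (ε / 4) * (1 + ε * y) * Real.exp (-ε * y) * Real.exp (ε * y)
      = (ε / 4) * (1 + ε * y) := by
    intro y
    rw [mul_assoc ((ε / 4) * (1 + ε * y)), e1 y, mul_one]
  constructor
  · have hv : Tendsto (fun x : ℝ => |x - b|) (Filter.comap (fun x : ℝ => |x|) atTop) atTop :=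
      aux_abs_tendsto b tendsto_comap
    have hr := aux_ratio_tendsto ε (|a - b|) hε (u := fun x => |x - a|)
      (v := fun x => |x - b|) hv (fun x => abs_nonneg _) habs
    refine hr.congr fun x => ?_
    rw [e2, e2, mul_div_mul_left _ _ hne]
  · have hub : ∀ x : ℝ,
        ((ε / 4) * (1 + ε * |x - a|) * Real.exp (-ε * |x - a|)) /
          ((ε / 4) * (1 + ε * |x - b|) * Real.exp (-ε * |x - b|)) ≤
        Real.exp (ε * |a - b|) := by
      intro x
      have hden : 0 < (ε / 4) * (1 + ε * |x - b|) * Real.exp (-ε * |x - b|) := by positivity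
      rw [div_le_iff₀ hden]
      have hk := aux_key (ε * |x - a|) (ε * |x - b|) (ε * |a - b|)
        (by positivity) (by positivity)
        (by nlinarith [habs x, abs_sub_abs_le_abs_sub (|x - a|) (|x - b|),
              (abs_le.1 (habs x)).2])
        (by nlinarith [(abs_le.1 (habs x)).1])
      have hmul := mul_le_mul_of_nonneg_left hk (by positivity : (0:ℝ) ≤ ε / 4)
      have ha1 : -ε * |x - a| = -(ε * |x - a|) := by ring
      have hb1 : -ε * |x - b| = -(ε * |x - b|) := by ring
      rw [ha1, hb1]
      nlinarith [hmul]
    have hbdd : BddAbove (Set.range fun x : ℝ =>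
        ((ε / 4) * (1 + ε * |x - a|) * Real.exp (-ε * |x - a|)) /
          ((ε / 4) * (1 + ε * |x - b|) * Real.exp (-ε * |x - b|))) := by
      refine ⟨Real.exp (ε * |a - b|), ?_⟩
      rintro _ ⟨x, rfl⟩
      exact hub x
    refine le_antisymm (ciSup_le hub) ?_
    rcases lt_or_gt_of_ne hab with h | h
    · -- a < b : go to -∞
      have hv : Tendsto (fun x : ℝ => |x - b|) atBot atTop :=
        aux_abs_tendsto b tendsto_abs_atBot_atTop
      have hr := aux_ratio_tendsto ε (|a - b|) hε (u := fun x => |x - a|)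
        (v := fun x => |x - b|) hv (fun x => abs_nonneg _) habs
      have hdba : |a - b| = b - a := by
        rw [abs_of_neg (by linarith : a - b < 0)]; ring
      have htend : Tendsto (fun x : ℝ =>
          ((ε / 4) * (1 + ε * |x - a|) * Real.exp (-ε * |x - a|)) /
            ((ε / 4) * (1 + ε * |x - b|) * Real.exp (-ε * |x - b|))) atBot
          (nhds (Real.exp (ε * |a - b|))) := by
        have h2 := hr.mul (tendsto_const_nhds (x := Real.exp (ε * |a - b|)))
        rw [one_mul] at h2
        apply h2.congr'
        filter_upwards [eventually_le_atBot (min a b)] with x hx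
        have hxa : |x - a| = a - x := by
          rw [abs_of_nonpos (by simp at hx; linarith [hx.1])]; ring
        have hxb : |x - b| = b - x := by
          rw [abs_of_nonpos (by simp at hx; linarith [hx.2])]; ring
        rw [hxa, hxb]
        rw [mul_assoc (ε / 4), mul_assoc (ε / 4), mul_div_mul_left _ _ hne,
          mul_div_mul_comm, ← Real.exp_sub]
        congr 1
        rw [hdba]
        ring
      exact le_of_tendsto htend (Eventually.of_forall fun x => le_ciSup hbdd x)
    · -- b < a : go to +∞
      have hv : Tendsto (fun x : ℝ => |x - b|) atTop atTop :=
        aux_abs_tendsto b tendsto_abs_atTop_atTop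
      have hr := aux_ratio_tendsto ε (|a - b|) hε (u := fun x => |x - a|)
        (v := fun x => |x - b|) hv (fun x => abs_nonneg _) habs
      have hdba : |a - b| = a - b := abs_of_pos (by linarith : 0 < a - b)
      have htend : Tendsto (fun x : ℝ =>
          ((ε / 4) * (1 + ε * |x - a|) * Real.exp (-ε * |x - a|)) /
            ((ε / 4) * (1 + ε * |x - b|) * Real.exp (-ε * |x - b|))) atTop
          (nhds (Real.exp (ε * |a - b|))) := by
        have h2 := hr.mul (tendsto_const_nhds (x := Real.exp (ε * |a - b|)))
        rw [one_mul] at h2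
        apply h2.congr'
        filter_upwards [eventually_ge_atTop (max a b)] with x hx
        have hxa : |x - a| = x - a := by
          rw [abs_of_nonneg (by simp at hx; linarith [hx.1])]
        have hxb : |x - b| = x - b := by
          rw [abs_of_nonneg (by simp at hx; linarith [hx.2])]
        rw [hxa, hxb]
        rw [mul_assoc (ε / 4), mul_assoc (ε / 4), mul_div_mul_left _ _ hne,
          mul_div_mul_comm, ← Real.exp_sub]
        congr 1
        rw [hdba]
        ring
      exact le_of_tendsto htend (Eventually.of_forall fun x => le_ciSup hbdd x)
end

section
/- Let β ∈ (1/2, 1) and let p_ε be the density of ũ = βu₁ + (1−β)u₂ where u₁, u₂ are i.i.d. Lap(2/ε). Then g(x) = p_ε(x)·exp((ε/(2β))|x|) is monotone increasing in |x|, and p_ε(x) is monotone decreasing in |x|; consequently sup_x p_ε(x−a)/p_ε(x−b) ≤ exp((ε/(2β))|a−b|) for all a, b ∈ ℝ. -/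
open Real

/-- Auxiliary: the core function is antitone on [0,∞). -/
lemma laplace_mix_antitone (ε β : ℝ) (hε : 0 < ε) (hb1 : (1/2:ℝ) < β) (hb2 : β < 1) :
    AntitoneOn (fun t : ℝ => β * Real.exp (-(ε / (2 * β)) * t) -
      (1 - β) * Real.exp (-(ε / (2 * (1 - β))) * t)) (Set.Ici 0) := by
  have hβ0 : 0 < β := by linarith
  have hβ1 : 0 < 1 - β := by linarith
  set α := ε / (2 * β) with hα
  set γ := ε / (2 * (1 - β)) with hγ
  have hα0 : 0 < α := by positivity
  have hγ0 : 0 < γ := by positivity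
  have hαγ : α ≤ γ := by
    rw [hα, hγ]
    apply div_le_div_of_nonneg_left hε.le (by linarith) (by linarith)
  set f : ℝ → ℝ := fun t => β * Real.exp (-α * t) - (1 - β) * Real.exp (-γ * t) with hf
  have hderiv : ∀ t, HasDerivAt f (β * (-α * Real.exp (-α * t)) -
      (1 - β) * (-γ * Real.exp (-γ * t))) t := by
    intro t
    have h1 : HasDerivAt (fun t : ℝ => Real.exp (-α * t)) (-α * Real.exp (-α * t)) t := by
      simpa [mul_comm] using (((hasDerivAt_id t).const_mul (-α)).exp)
    have h2 : HasDerivAt (fun t : ℝ => Real.exp (-γ * t)) (-γ * Real.exp (-γ * t)) t := by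
      simpa [mul_comm] using (((hasDerivAt_id t).const_mul (-γ)).exp)
    exact (h1.const_mul β).sub (h2.const_mul (1 - β))
  apply antitoneOn_of_deriv_nonpos (convex_Ici 0)
  · exact (Continuous.continuousOn (by continuity)).congr (fun x _ => rfl)
  · intro t ht
    exact (hderiv t).differentiableAt.differentiableWithinAt
  · intro t ht
    simp only [interior_Ici, Set.mem_Ioi] at ht
    rw [(hderiv t).deriv]
    have hβα : β * α = ε / 2 := by
      rw [hα]; field_simp
    have hβγ : (1 - β) * γ = ε / 2 := by
      rw [hγ]; field_simp
    have hle : Real.exp (-γ * t) ≤ Real.exp (-α * t) := by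
      apply Real.exp_le_exp.mpr
      nlinarith
    nlinarith [Real.exp_pos (-α * t), Real.exp_pos (-γ * t)]

/-- for β ∈ (1/2, 1), the density
p_ε(x) = [ε/(4(2β-1))]·[β·e^{-(ε/(2β))|x|} - (1-β)·e^{-(ε/(2(1-β)))|x|}] of
βu₁+(1-β)u₂ is decreasing in |x|, g(x) = p_ε(x)e^{(ε/(2β))|x|} is increasing in
|x|, and hence p_ε(x-a)/p_ε(x-b) ≤ exp((ε/(2β))|a-b|). -/
theorem convex_laplace_DP_bound
    (ε β : ℝ) (hε : 0 < ε) (hβ : β ∈ Set.Ioo (1 / 2 : ℝ) 1) :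
    let p : ℝ → ℝ := fun x =>
      (ε / (4 * (2 * β - 1))) *
        (β * Real.exp (-(ε / (2 * β)) * |x|) -
          (1 - β) * Real.exp (-(ε / (2 * (1 - β))) * |x|))
    (∀ x y : ℝ, |x| ≤ |y| →
        p x * Real.exp ((ε / (2 * β)) * |x|) ≤
          p y * Real.exp ((ε / (2 * β)) * |y|)) ∧
    (∀ x y : ℝ, |y| ≤ |x| → p x ≤ p y) ∧
    ∀ a b x : ℝ, p (x - a) / p (x - b) ≤ Real.exp ((ε / (2 * β)) * |a - b|) := by
  obtain ⟨hb1, hb2⟩ := hβ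
  intro p
  have hβ0 : 0 < β := by linarith
  have hβ1 : 0 < 1 - β := by linarith
  have hC : 0 < ε / (4 * (2 * β - 1)) := by
    apply div_pos hε; linarith
  have hα0 : 0 < ε / (2 * β) := by positivity
  have hγ0 : 0 < ε / (2 * (1 - β)) := by positivity
  have hαγ : ε / (2 * β) ≤ ε / (2 * (1 - β)) :=
    div_le_div_of_nonneg_left hε.le (by linarith) (by linarith)
  -- key rewriting of g
  have hg : ∀ x : ℝ, p x * Real.exp ((ε / (2 * β)) * |x|) =
      (ε / (4 * (2 * β - 1))) *
        (β - (1 - β) * Real.exp ((ε / (2 * β) - ε / (2 * (1 - β))) * |x|)) := by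
    intro x
    have e1 : Real.exp (-(ε / (2 * β)) * |x|) * Real.exp ((ε / (2 * β)) * |x|) = 1 := by
      rw [← Real.exp_add, show -(ε / (2 * β)) * |x| + (ε / (2 * β)) * |x| = 0 by ring,
        Real.exp_zero]
    have e2 : Real.exp (-(ε / (2 * (1 - β))) * |x|) * Real.exp ((ε / (2 * β)) * |x|) =
        Real.exp ((ε / (2 * β) - ε / (2 * (1 - β))) * |x|) := by
      rw [← Real.exp_add]; congr 1; ring
    simp only [p]
    calc (ε / (4 * (2 * β - 1))) *
          (β * Real.exp (-(ε / (2 * β)) * |x|) -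
            (1 - β) * Real.exp (-(ε / (2 * (1 - β))) * |x|)) * Real.exp ((ε / (2 * β)) * |x|)
        = (ε / (4 * (2 * β - 1))) *
          (β * (Real.exp (-(ε / (2 * β)) * |x|) * Real.exp ((ε / (2 * β)) * |x|)) -
            (1 - β) * (Real.exp (-(ε / (2 * (1 - β))) * |x|) *
              Real.exp ((ε / (2 * β)) * |x|))) := by ring
      _ = _ := by rw [e1, e2]; ring
  have hanti := laplace_mix_antitone ε β hε hb1 hb2
  -- part 1
  have part1 : ∀ x y : ℝ, |x| ≤ |y| →
      p x * Real.exp ((ε / (2 * β)) * |x|) ≤ p y * Real.exp ((ε / (2 * β)) * |y|) := by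
    intro x y hxy
    rw [hg x, hg y]
    have hee : Real.exp ((ε / (2 * β) - ε / (2 * (1 - β))) * |y|) ≤
        Real.exp ((ε / (2 * β) - ε / (2 * (1 - β))) * |x|) := by
      apply Real.exp_le_exp.mpr
      have h1 : ε / (2 * β) - ε / (2 * (1 - β)) ≤ 0 := by linarith
      nlinarith [abs_nonneg x]
    have := mul_le_mul_of_nonneg_left hee hβ1.le
    nlinarith
  -- part 2
  have part2 : ∀ x y : ℝ, |y| ≤ |x| → p x ≤ p y := by
    intro x y hxy
    simp only [p]
    apply mul_le_mul_of_nonneg_left _ hC.le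
    exact hanti (Set.mem_Ici.mpr (abs_nonneg y)) (Set.mem_Ici.mpr (abs_nonneg x)) hxy
  -- positivity
  have hpos : ∀ x : ℝ, 0 < p x := by
    intro x
    simp only [p]
    apply mul_pos hC
    have h1 : Real.exp (-(ε / (2 * (1 - β))) * |x|) ≤ Real.exp (-(ε / (2 * β)) * |x|) := by
      apply Real.exp_le_exp.mpr
      nlinarith [abs_nonneg x]
    nlinarith [Real.exp_pos (-(ε / (2 * β)) * |x|)]
  refine ⟨part1, part2, ?_⟩
  intro a b x
  rw [div_le_iff₀ (hpos (x - b))]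
  rcases le_or_gt |x - a| |x - b| with h | h
  · have h1 := part1 _ _ h
    have h2 : p (x - a) ≤ p (x - b) * Real.exp ((ε / (2 * β)) * (|x - b| - |x - a|)) := by
      have hE := Real.exp_pos ((ε / (2 * β)) * |x - a|)
      have key : p (x - b) * Real.exp ((ε / (2 * β)) * (|x - b| - |x - a|)) *
          Real.exp ((ε / (2 * β)) * |x - a|) =
          p (x - b) * Real.exp ((ε / (2 * β)) * |x - b|) := by
        rw [mul_assoc, ← Real.exp_add]
        congr 2
        ring
      rw [← mul_le_mul_iff_of_pos_right hE, key]
      exact h1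
    calc p (x - a) ≤ p (x - b) * Real.exp ((ε / (2 * β)) * (|x - b| - |x - a|)) := h2
      _ ≤ Real.exp ((ε / (2 * β)) * |a - b|) * p (x - b) := by
          rw [mul_comm (p (x - b))]
          apply mul_le_mul_of_nonneg_right _ (hpos (x - b)).le
          apply Real.exp_le_exp.mpr
          apply mul_le_mul_of_nonneg_left _ hα0.le
          calc |x - b| - |x - a| ≤ |(x - b) - (x - a)| := abs_sub_abs_le_abs_sub _ _
            _ = |a - b| := by rw [show (x - b) - (x - a) = a - b by ring]
  · have h1 := part2 _ _ h.le
    calc p (x - a) ≤ p (x - b) := h1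
      _ = 1 * p (x - b) := (one_mul _).symm
      _ ≤ Real.exp ((ε / (2 * β)) * |a - b|) * p (x - b) := by
          apply mul_le_mul_of_nonneg_right _ (hpos (x - b)).le
          exact Real.one_le_exp (by positivity)
end
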